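/- The function b ↦ b^b / Γ(b+1) is log-convex on the positive reals, i.e., for all b_1, b_2 > 0 and all α, β ≥ 0 with α + β = 1, one has (αb_1+βb_2)^{αb_1+βb_2} / Γ(αb_1+βb_2+1) ≤ (b_1^{b_1}/Γ(b_1+1))^α · (b_2^{b_2}/Γ(b_2+1))^β. (Note: the inequality direction is that of log-convexity; equivalently, log(b^b/Γ(b+1)) is a convex function of b > 0.) -/

import Mathlib

open Real Filter Finset Nat

/-- The log of the `n`-th Gauss-product approximation to `b^b/Γ(b+1)` (up to constants). -/
private noncomputable def gaussLog (n : ℕ) (b : ℝ) : ℝ :=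
  b * Real.log b + ∑ j ∈ Finset.range (n + 1), Real.log (b + 1 + j) - b * Real.log n

private lemma gaussLog_hasDerivAt (n : ℕ) {x : ℝ} (hx : 0 < x) :
    HasDerivAt (gaussLog n)
      (Real.log x + 1 + ∑ j ∈ Finset.range (n + 1), (x + 1 + j)⁻¹ - Real.log n) x := by
  have h1 : HasDerivAt (fun b : ℝ => b * Real.log b) (Real.log x + 1) x :=
    Real.hasDerivAt_mul_log hx.ne'
  have h2 : HasDerivAt (fun b : ℝ => ∑ j ∈ Finset.range (n + 1), Real.log (b + 1 + j))
      (∑ j ∈ Finset.range (n + 1), (x + 1 + j)⁻¹) x := by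
    refine HasDerivAt.fun_sum fun j _ => ?_
    have hpos : (0:ℝ) < x + 1 + j := by positivity
    simpa [one_div] using
      (((hasDerivAt_id x).add_const (1:ℝ)).add_const (j:ℝ)).log hpos.ne'
  have h3 : HasDerivAt (fun b : ℝ => b * Real.log n) (Real.log n) x :=
    hasDerivAt_mul_const _
  exact (h1.add h2).sub h3

private lemma gaussLog_deriv_hasDerivAt (n : ℕ) {x : ℝ} (hx : 0 < x) :
    HasDerivAt (fun b : ℝ =>
        Real.log b + 1 + ∑ j ∈ Finset.range (n + 1), (b + 1 + j)⁻¹ - Real.log n)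
      (x⁻¹ - ∑ j ∈ Finset.range (n + 1), ((x + 1 + j) ^ 2)⁻¹) x := by
  have h1 : HasDerivAt (fun b : ℝ => Real.log b) x⁻¹ x := Real.hasDerivAt_log hx.ne'
  have h2 : HasDerivAt (fun b : ℝ => ∑ j ∈ Finset.range (n + 1), (b + 1 + j)⁻¹)
      (∑ j ∈ Finset.range (n + 1), (-1 / (x + 1 + j) ^ 2)) x := by
    refine HasDerivAt.fun_sum fun j _ => ?_
    have hpos : (0:ℝ) < x + 1 + j := by positivity
    simpa using
      (((hasDerivAt_id x).add_const (1:ℝ)).add_const (j:ℝ)).fun_inv hpos.ne'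
  have h := ((h1.add_const 1).fun_add h2).sub_const (Real.log n)
  convert h using 1
  · rfl
  · rfl
  rw [sub_eq_add_neg]
  congr 1
  rw [← Finset.sum_neg_distrib]
  exact Finset.sum_congr rfl fun j _ => by rw [neg_div, one_div]

private lemma gaussLog_convexOn (n : ℕ) : ConvexOn ℝ (Set.Ioi (0:ℝ)) (gaussLog n) := by
  refine convexOn_of_hasDerivWithinAt2_nonneg (convex_Ioi 0)
    (f' := fun b => Real.log b + 1 + ∑ j ∈ Finset.range (n + 1), (b + 1 + j)⁻¹ - Real.log n)
    (f'' := fun b => b⁻¹ - ∑ j ∈ Finset.range (n + 1), ((b + 1 + j) ^ 2)⁻¹)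
    ?_ ?_ ?_ ?_
  · exact fun x hx => ((gaussLog_hasDerivAt n hx).continuousAt).continuousWithinAt
  · intro x hx
    rw [interior_Ioi] at hx
    exact (gaussLog_hasDerivAt n hx).hasDerivWithinAt
  · intro x hx
    rw [interior_Ioi] at hx
    exact (gaussLog_deriv_hasDerivAt n hx).hasDerivWithinAt
  · intro x hx
    rw [interior_Ioi] at hx
    have hx' : (0:ℝ) < x := hx
    rw [sub_nonneg]
    calc ∑ j ∈ Finset.range (n + 1), ((x + 1 + j) ^ 2)⁻¹
        ≤ ∑ j ∈ Finset.range (n + 1), ((x + j)⁻¹ - (x + (j + 1 : ℕ))⁻¹) := by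
          refine Finset.sum_le_sum fun j _ => ?_
          have h1 : (0:ℝ) < x + j := by positivity
          have h2 : (0:ℝ) < x + j + 1 := by positivity
          push_cast
          have e2 : x + ((j:ℝ) + 1) = x + j + 1 := by ring
          have e : (x + (j:ℝ))⁻¹ - (x + (j:ℝ) + 1)⁻¹ = ((x + j) * (x + j + 1))⁻¹ := by
            rw [inv_sub_inv h1.ne' h2.ne',
              show x + (j:ℝ) + 1 - (x + j) = 1 by ring, one_div]
          rw [e2, e]
          exact inv_anti₀ (by positivity) (by nlinarith)
      _ = (x + (0:ℕ))⁻¹ - (x + (n + 1 : ℕ))⁻¹ :=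
          Finset.sum_range_sub' (fun j : ℕ => (x + j)⁻¹) (n + 1)
      _ ≤ x⁻¹ := by
          have h3 : (0:ℝ) < x + ((n:ℝ) + 1) := by positivity
          push_cast
          simp only [add_zero]
          nlinarith [inv_pos.mpr h3]

private lemma exp_gaussLog (n : ℕ) {b : ℝ} (hb : 0 < b) (hn : 1 ≤ n) :
    Real.exp (gaussLog n b) =
      b ^ b / Real.GammaSeq (b + 1) n * ((n : ℝ) * (n ! : ℝ)) := by
  have hn0 : (0:ℝ) < n := by exact_mod_cast hn
  have hprod : (0:ℝ) < ∏ j ∈ Finset.range (n + 1), (b + 1 + j) := by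
    refine Finset.prod_pos fun j _ => by positivity
  have hGS : Real.GammaSeq (b + 1) n =
      (n : ℝ) ^ (b + 1) * n ! / ∏ j ∈ Finset.range (n + 1), (b + 1 + j) := rfl
  rw [gaussLog, Real.exp_sub, Real.exp_add, Real.exp_sum]
  have e1 : Real.exp (b * Real.log b) = b ^ b := by
    rw [Real.rpow_def_of_pos hb, mul_comm]
  have e2 : ∀ j ∈ Finset.range (n + 1), Real.exp (Real.log (b + 1 + j)) = b + 1 + (j:ℝ) := by
    intro j _
    exact Real.exp_log (by positivity)
  have e3 : Real.exp (b * Real.log n) = (n:ℝ) ^ b := by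
    rw [Real.rpow_def_of_pos hn0, mul_comm]
  rw [e1, Finset.prod_congr rfl e2, e3, hGS]
  have hnb : (0:ℝ) < (n:ℝ) ^ b := Real.rpow_pos_of_pos hn0 _
  have hfact : (0:ℝ) < (n ! : ℝ) := by exact_mod_cast n.factorial_pos
  rw [Real.rpow_add hn0, Real.rpow_one]
  field_simp

theorem log_convex_self_pow_div_gamma (b₁ b₂ α β : ℝ)
    (hb₁ : 0 < b₁) (hb₂ : 0 < b₂)
    (hα : 0 ≤ α) (hβ : 0 ≤ β) (hαβ : α + β = 1) :
    (α * b₁ + β * b₂) ^ (α * b₁ + β * b₂) / Real.Gamma (α * b₁ + β * b₂ + 1) ≤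
      (b₁ ^ b₁ / Real.Gamma (b₁ + 1)) ^ α * (b₂ ^ b₂ / Real.Gamma (b₂ + 1)) ^ β := by
  set c := α * b₁ + β * b₂ with hc_def
  have hc : 0 < c := by
    rcases hα.lt_or_eq with h | h
    · have := mul_pos h hb₁
      nlinarith [mul_nonneg hβ hb₂.le]
    · have hβ1 : β = 1 := by linarith
      simp [hc_def, ← h, hβ1, hb₂]
  -- per-n inequality
  have key : ∀ n : ℕ, 1 ≤ n →
      c ^ c / Real.GammaSeq (c + 1) n ≤
        (b₁ ^ b₁ / Real.GammaSeq (b₁ + 1) n) ^ α *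
          (b₂ ^ b₂ / Real.GammaSeq (b₂ + 1) n) ^ β := by
    intro n hn
    have hK : (0:ℝ) < (n : ℝ) * (n ! : ℝ) := by
      have h1 : (0:ℝ) < (n:ℝ) := by exact_mod_cast hn
      have h2 : (0:ℝ) < (n ! : ℝ) := by exact_mod_cast n.factorial_pos
      positivity
    have hP : ∀ b : ℝ, 0 < b → b ^ b / Real.GammaSeq (b + 1) n =
        Real.exp (gaussLog n b) / ((n : ℝ) * (n ! : ℝ)) := by
      intro b hb
      rw [exp_gaussLog n hb hn, mul_div_cancel_right₀ _ hK.ne']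
    have hconv := (gaussLog_convexOn n).2 (Set.mem_Ioi.mpr hb₁) (Set.mem_Ioi.mpr hb₂) hα hβ hαβ
    simp only [smul_eq_mul] at hconv
    rw [hP _ hb₁, hP _ hb₂, hP _ hc,
      Real.div_rpow (Real.exp_pos _).le hK.le, Real.div_rpow (Real.exp_pos _).le hK.le,
      _root_.div_mul_div_comm, ← Real.rpow_add hK, hαβ, Real.rpow_one,
      ← Real.exp_mul, ← Real.exp_mul, ← Real.exp_add]
    gcongr
    calc gaussLog n c ≤ α * gaussLog n b₁ + β * gaussLog n b₂ := hconv
      _ = gaussLog n b₁ * α + gaussLog n b₂ * β := by ring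
  -- pass to the limit
  have hΓ : ∀ b : ℝ, 0 < b →
      Filter.Tendsto (fun m : ℕ => b ^ b / Real.GammaSeq (b + 1) m) atTop
        (nhds (b ^ b / Real.Gamma (b + 1))) := by
    intro b hb
    exact tendsto_const_nhds.div (Real.GammaSeq_tendsto_Gamma (b + 1))
      (Real.Gamma_pos_of_pos (by linarith)).ne'
  refine le_of_tendsto_of_tendsto (hΓ c hc)
    (((hΓ b₁ hb₁).rpow_const (Or.inr hα)).mul ((hΓ b₂ hb₂).rpow_const (Or.inr hβ)))
    (eventually_atTop.mpr ⟨1, key⟩)
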